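/- Let M₂ > 0, let x ∈ ℝ, and let f : ℝ → ℝ be twice differentiable on an open interval containing x with |f''(t)| ≤ M₂ on that interval. Suppose that for each δ > 0 a function f_δ : ℝ → ℝ is given with |f_δ(t) − f(t)| ≤ δ for all t ∈ ℝ. Then, with h(δ) = √(2δ/M₂), the quantity (f_δ(x+h(δ)) − f_δ(x−h(δ)))/(2h(δ)) converges to f'(x) as δ → 0⁺. -/

import Mathlib

set_option maxHeartbeats 1000000 in
/-- for `f` twice differentiable on an open interval containing `x`
with `|f''| ≤ M₂` there, and noisy data `F δ` with `‖F δ - f‖_∞ ≤ δ`, the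
symmetric difference quotient with step `h(δ) = √(2δ/M₂)` converges to `f'(x)`
as `δ → 0⁺`. -/
theorem stable_diff_convergence
    (M₂ x c d : ℝ) (hM₂ : 0 < M₂) (hx : x ∈ Set.Ioo c d)
    (f f' f'' : ℝ → ℝ)
    (hder1 : ∀ t ∈ Set.Ioo c d, HasDerivAt f (f' t) t)
    (hder2 : ∀ t ∈ Set.Ioo c d, HasDerivAt f' (f'' t) t)
    (hbound : ∀ t ∈ Set.Ioo c d, |f'' t| ≤ M₂)
    (F : ℝ → ℝ → ℝ)
    (hnoise : ∀ δ : ℝ, 0 < δ → ∀ t : ℝ, |F δ t - f t| ≤ δ) :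
    Filter.Tendsto
      (fun δ : ℝ =>
        (F δ (x + Real.sqrt (2 * δ / M₂)) - F δ (x - Real.sqrt (2 * δ / M₂))) /
          (2 * Real.sqrt (2 * δ / M₂)))
      (nhdsWithin 0 (Set.Ioi 0)) (nhds (f' x)) := by
  obtain ⟨hxc, hxd⟩ := hx
  have hlip : ∀ a ∈ Set.Ioo c d, ∀ b ∈ Set.Ioo c d, ‖f' b - f' a‖ ≤ M₂ * ‖b - a‖ := by
    intro a ha b hb
    exact (convex_Ioo c d).norm_image_sub_le_of_norm_hasDerivWithin_le
      (fun t ht => (hder2 t ht).hasDerivWithinAt)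
      (fun t ht => by rw [Real.norm_eq_abs]; exact hbound t ht) ha hb
  rw [Metric.tendsto_nhdsWithin_nhds]
  intro ε hε
  set r : ℝ := min (d - x) (x - c) with hrdef
  have hr0 : 0 < r := lt_min (by linarith) (by linarith)
  set s : ℝ := min r (ε / (2 * M₂)) with hsdef
  have hs0 : 0 < s := lt_min hr0 (by positivity)
  refine ⟨M₂ * s ^ 2 / 2, by positivity, ?_⟩
  intro δ hδ hd
  simp only [Set.mem_Ioi] at hδ
  rw [Real.dist_eq, sub_zero, abs_of_pos hδ] at hd
  set h : ℝ := Real.sqrt (2 * δ / M₂) with hhdef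
  have hh0 : 0 < h := Real.sqrt_pos.2 (by positivity)
  have hsq : h ^ 2 = 2 * δ / M₂ := Real.sq_sqrt (by positivity)
  have hδ2 : M₂ * h ^ 2 = 2 * δ := by
    rw [hsq]; field_simp
  have hhs : h < s := by
    by_contra hc
    push_neg at hc
    have h1 : s ^ 2 ≤ h ^ 2 := by nlinarith
    nlinarith
  have hhr : h < r := lt_of_lt_of_le hhs (min_le_left _ _)
  have hrd : r ≤ d - x := min_le_left _ _
  have hrc : r ≤ x - c := min_le_right _ _
  have hmem : ∀ t : ℝ, |t| ≤ h → x + t ∈ Set.Ioo c d := by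
    intro t ht
    obtain ⟨h1, h2⟩ := abs_le.1 ht
    exact ⟨by linarith, by linarith⟩
  -- derivative of g t = f (x+t) - f (x-t) - 2*t*f' x
  have hg : ∀ t ∈ Set.Icc (0:ℝ) h,
      HasDerivWithinAt (fun t => f (x + t) - f (x - t) - 2 * t * f' x)
        (f' (x + t) + f' (x - t) - 2 * f' x) (Set.Icc 0 h) t := by
    intro t ht
    have htm : |t| ≤ h := by
      rw [abs_le]; exact ⟨by linarith [ht.1], ht.2⟩
    have htm' : |(-t)| ≤ h := by rwa [abs_neg]
    have h1 : HasDerivAt (fun t => f (x + t)) (f' (x + t)) t := by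
      have := (hder1 (x + t) (hmem t htm)).comp t
        ((hasDerivAt_id t).const_add x)
      simpa [Function.comp_def] using this
    have h2 : HasDerivAt (fun t => f (x - t)) (-f' (x - t)) t := by
      have := (hder1 (x - t) (by simpa [sub_eq_add_neg] using hmem (-t) htm')).comp t
        ((hasDerivAt_id t).neg.const_add x)
      simpa [sub_eq_add_neg, Function.comp_def] using this
    have h3 : HasDerivAt (fun t : ℝ => 2 * t * f' x) (2 * f' x) t := by
      simpa [mul_comm, mul_assoc] using
        ((hasDerivAt_id t).const_mul 2).mul_const (f' x)
    have := (h1.sub h2).sub h3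
    have heq : f' (x + t) - -f' (x - t) - 2 * f' x
        = f' (x + t) + f' (x - t) - 2 * f' x := by ring
    rw [heq] at this
    exact this.hasDerivWithinAt
  have hgb : ∀ t ∈ Set.Icc (0:ℝ) h,
      ‖f' (x + t) + f' (x - t) - 2 * f' x‖ ≤ 2 * M₂ * h := by
    intro t ht
    have htm : |t| ≤ h := by rw [abs_le]; exact ⟨by linarith [ht.1], ht.2⟩
    have htm' : |(-t)| ≤ h := by rwa [abs_neg]
    have l1 := hlip x ⟨hxc, hxd⟩ (x + t) (hmem t htm)
    have l2 := hlip x ⟨hxc, hxd⟩ (x - t) (by simpa [sub_eq_add_neg] using hmem (-t) htm')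
    simp only [add_sub_cancel_left, Real.norm_eq_abs] at l1
    have : x - t - x = -t := by ring
    rw [this] at l2
    simp only [Real.norm_eq_abs, abs_neg] at l2
    have habs : |f' (x + t) + f' (x - t) - 2 * f' x|
        ≤ |f' (x + t) - f' x| + |f' (x - t) - f' x| := by
      have := abs_add_le (f' (x + t) - f' x) (f' (x - t) - f' x)
      have he : f' (x + t) + f' (x - t) - 2 * f' x
          = (f' (x + t) - f' x) + (f' (x - t) - f' x) := by ring
      rw [he]; exact this
    rw [Real.norm_eq_abs]
    nlinarith [abs_le.1 htm]
  have key := (convex_Icc (0:ℝ) h).norm_image_sub_le_of_norm_hasDerivWithin_le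
    hg hgb (Set.left_mem_Icc.2 hh0.le) (Set.right_mem_Icc.2 hh0.le)
  simp only [Real.norm_eq_abs, sub_zero, mul_zero, zero_mul, add_zero, sub_self,
    abs_of_pos hh0] at key
  -- key : |f (x+h) - f (x-h) - 2*h*f' x - (f x - f x - 0)| ≤ 2*M₂*h*h
  have hn1 := hnoise δ hδ (x + h)
  have hn2 := hnoise δ hδ (x - h)
  rw [Real.dist_eq]
  have hne : 2 * h ≠ 0 := by positivity
  have hexp : (F δ (x + h) - F δ (x - h)) / (2 * h) - f' x
      = ((F δ (x + h) - f (x + h)) - (F δ (x - h) - f (x - h))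
        + (f (x + h) - f (x - h) - 2 * h * f' x)) / (2 * h) := by
    field_simp
    ring
  rw [hexp, abs_div, abs_of_pos (by positivity : (0:ℝ) < 2 * h)]
  rw [div_lt_iff₀ (by positivity : (0:ℝ) < 2 * h)]
  have habs2 : |(F δ (x + h) - f (x + h)) - (F δ (x - h) - f (x - h))
      + (f (x + h) - f (x - h) - 2 * h * f' x)|
      ≤ |F δ (x + h) - f (x + h)| + |F δ (x - h) - f (x - h)|
        + |f (x + h) - f (x - h) - 2 * h * f' x| := by
    calc _ ≤ |(F δ (x + h) - f (x + h)) - (F δ (x - h) - f (x - h))|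
          + |f (x + h) - f (x - h) - 2 * h * f' x| := abs_add_le _ _
      _ ≤ _ := by
          have := abs_sub (F δ (x + h) - f (x + h)) (F δ (x - h) - f (x - h))
          linarith
  -- δ = M₂ * h^2 / 2
  have hδeq : δ = M₂ * h ^ 2 / 2 := by
    rw [hsq]; field_simp
  have hεb : 2 * M₂ * s ≤ ε := by
    have : s ≤ ε / (2 * M₂) := min_le_right _ _
    calc 2 * M₂ * s ≤ 2 * M₂ * (ε / (2 * M₂)) := by nlinarith
      _ = ε := by field_simp
  calc |(F δ (x + h) - f (x + h)) - (F δ (x - h) - f (x - h))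
      + (f (x + h) - f (x - h) - 2 * h * f' x)|
      ≤ δ + δ + 2 * M₂ * h * h := by
        have : |f (x + h) - f (x - h) - 2 * h * f' x| ≤ 2 * M₂ * h * h := by
          nlinarith [key]
        linarith [habs2]
    _ = 3 * M₂ * h ^ 2 := by rw [hδeq]; ring
    _ < ε * (2 * h) := by nlinarith
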